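/- Let Ω ⊆ ℝ² be open and connected with x > 0 at every point (x,y) ∈ Ω, and let v, w : Ω → ℝ be C² with v > 0 and w_y ≠ 0 on Ω (subscripts denote partial derivatives). Assume on Ω: (i) w_xx + w_yy − w_x/x = −2(v_x w_x + v_y w_y)/v, (ii) v_xx + v_yy + v_x/x = (v_x² + v_y²)/v − v³(w_x² + w_y²)/x², and (iii) v_x w_x + v_y w_y = 0. Then the function c² := x²·v_x²/(v²·w_y²) + v² has vanishing partial derivatives (c²)_x = (c²)_y = 0 on Ω, i.e. it is constant on Ω. -/

import Mathlib

set_option maxHeartbeats 1000000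

/-- Partial derivative with respect to the first coordinate of `ℝ × ℝ`. -/
noncomputable def pdx (f : ℝ × ℝ → ℝ) (p : ℝ × ℝ) : ℝ := fderiv ℝ f p (1, 0)

/-- Partial derivative with respect to the second coordinate of `ℝ × ℝ`. -/
noncomputable def pdy (f : ℝ × ℝ → ℝ) (p : ℝ × ℝ) : ℝ := fderiv ℝ f p (0, 1)

lemma pdx_def (f : ℝ × ℝ → ℝ) : pdx f = fun q => fderiv ℝ f q (1, 0) := rfl
lemma pdy_def (f : ℝ × ℝ → ℝ) : pdy f = fun q => fderiv ℝ f q (0, 1) := rfl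

lemma diff_pd {Ω : Set (ℝ × ℝ)} (hΩ : IsOpen Ω) {f : ℝ × ℝ → ℝ}
    (hf : ContDiffOn ℝ 2 f Ω) {p : ℝ × ℝ} (hp : p ∈ Ω) (u : ℝ × ℝ) :
    DifferentiableAt ℝ (fun q => fderiv ℝ f q u) p := by
  have h1 : ContDiffAt ℝ 2 f p := hf.contDiffAt (hΩ.mem_nhds hp)
  have h2 : DifferentiableAt ℝ (fderiv ℝ f) p :=
    (h1.fderiv_right (m := 1) (by norm_num)).differentiableAt (by norm_num)
  exact h2.clm_apply (differentiableAt_const u)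

lemma symm_pd {Ω : Set (ℝ × ℝ)} (hΩ : IsOpen Ω) {f : ℝ × ℝ → ℝ}
    (hf : ContDiffOn ℝ 2 f Ω) {p : ℝ × ℝ} (hp : p ∈ Ω) (u t : ℝ × ℝ) :
    fderiv ℝ (fun q => fderiv ℝ f q u) p t = fderiv ℝ (fun q => fderiv ℝ f q t) p u := by
  have h1 : ContDiffAt ℝ 2 f p := hf.contDiffAt (hΩ.mem_nhds hp)
  have hd : DifferentiableAt ℝ (fderiv ℝ f) p :=
    (h1.fderiv_right (m := 1) (by norm_num)).differentiableAt (by norm_num)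
  have hsym := h1.isSymmSndFDerivAt (by simp [minSmoothness_of_isRCLikeNormedField])
  rw [fderiv_clm_apply hd (differentiableAt_const u),
      fderiv_clm_apply hd (differentiableAt_const t)]
  simpa using hsym.eq t u

/-- **`c² = x²v_x²/(v²w_y²) + v²` is a first integral of the Papapetrou
system.**  If `(v, w)` solves the reduced vacuum Einstein equations together
with Papapetrou's condition on a connected open set `Ω ⊆ {x > 0}` with `v > 0`
and `w_y ≠ 0`, then the partial derivatives of `c²` vanish on `Ω`, i.e. `c²`
is constant on `Ω`. -/
theorem papapetrou_first_integral
    (Ω : Set (ℝ × ℝ)) (hΩ : IsOpen Ω) (hconn : IsConnected Ω)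
    (hx : ∀ p ∈ Ω, 0 < p.1)
    (v w : ℝ × ℝ → ℝ)
    (hv : ContDiffOn ℝ 2 v Ω) (hw : ContDiffOn ℝ 2 w Ω)
    (hvpos : ∀ p ∈ Ω, 0 < v p)
    (hwy : ∀ p ∈ Ω, pdy w p ≠ 0)
    (heq1 : ∀ p ∈ Ω,
      pdx (pdx w) p + pdy (pdy w) p - pdx w p / p.1 =
        -2 * (pdx v p * pdx w p + pdy v p * pdy w p) / v p)
    (heq2 : ∀ p ∈ Ω,
      pdx (pdx v) p + pdy (pdy v) p + pdx v p / p.1 =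
        ((pdx v p) ^ 2 + (pdy v p) ^ 2) / v p -
          (v p) ^ 3 * ((pdx w p) ^ 2 + (pdy w p) ^ 2) / p.1 ^ 2)
    (heq3 : ∀ p ∈ Ω, pdx v p * pdx w p + pdy v p * pdy w p = 0) :
    (∀ p ∈ Ω,
      pdx (fun q => q.1 ^ 2 * (pdx v q) ^ 2 / ((v q) ^ 2 * (pdy w q) ^ 2) + (v q) ^ 2) p = 0 ∧
      pdy (fun q => q.1 ^ 2 * (pdx v q) ^ 2 / ((v q) ^ 2 * (pdy w q) ^ 2) + (v q) ^ 2) p = 0) ∧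
    ∀ p ∈ Ω, ∀ q ∈ Ω,
      p.1 ^ 2 * (pdx v p) ^ 2 / ((v p) ^ 2 * (pdy w p) ^ 2) + (v p) ^ 2 =
        q.1 ^ 2 * (pdx v q) ^ 2 / ((v q) ^ 2 * (pdy w q) ^ 2) + (v q) ^ 2 := by
  simp only [pdx_def, pdy_def] at heq1 heq2 heq3 hwy ⊢
  have hfe : (fun q : ℝ × ℝ => q.1 ^ 2 * (fderiv ℝ v q (1, 0)) ^ 2 /
        ((v q) ^ 2 * (fderiv ℝ w q (0, 1)) ^ 2) + (v q) ^ 2) =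
      (fun x : ℝ × ℝ => x.1 * x.1 * (fderiv ℝ v x (1, 0) * fderiv ℝ v x (1, 0)) *
        ((fun y : ℝ => y⁻¹) ∘ fun y => v y * v y * (fderiv ℝ w y (0, 1) * fderiv ℝ w y (0, 1))) x
        + v x * v x) := by
    funext q
    simp only [Function.comp_apply]
    ring
  have hmain : ∀ p ∈ Ω,
      DifferentiableAt ℝ (fun x : ℝ × ℝ => x.1 * x.1 *
          (fderiv ℝ v x (1, 0) * fderiv ℝ v x (1, 0)) *
          ((fun y : ℝ => y⁻¹) ∘ fun y => v y * v y *
            (fderiv ℝ w y (0, 1) * fderiv ℝ w y (0, 1))) x + v x * v x) p ∧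
      fderiv ℝ (fun x : ℝ × ℝ => x.1 * x.1 *
          (fderiv ℝ v x (1, 0) * fderiv ℝ v x (1, 0)) *
          ((fun y : ℝ => y⁻¹) ∘ fun y => v y * v y *
            (fderiv ℝ w y (0, 1) * fderiv ℝ w y (0, 1))) x + v x * v x) p ((1:ℝ), (0:ℝ)) = 0 ∧
      fderiv ℝ (fun x : ℝ × ℝ => x.1 * x.1 *
          (fderiv ℝ v x (1, 0) * fderiv ℝ v x (1, 0)) *
          ((fun y : ℝ => y⁻¹) ∘ fun y => v y * v y *
            (fderiv ℝ w y (0, 1) * fderiv ℝ w y (0, 1))) x + v x * v x) p ((0:ℝ), (1:ℝ)) = 0 := by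
    intro p hp
    have hvd : DifferentiableAt ℝ v p :=
      (hv.contDiffAt (hΩ.mem_nhds hp)).differentiableAt (by norm_num)
    have hAx : DifferentiableAt ℝ (fun q => fderiv ℝ v q (1, 0)) p := diff_pd hΩ hv hp _
    have hAy : DifferentiableAt ℝ (fun q => fderiv ℝ v q (0, 1)) p := diff_pd hΩ hv hp _
    have hWx : DifferentiableAt ℝ (fun q => fderiv ℝ w q (1, 0)) p := diff_pd hΩ hw hp _
    have hWy : DifferentiableAt ℝ (fun q => fderiv ℝ w q (0, 1)) p := diff_pd hΩ hw hp _
    have hV : v p ≠ 0 := ne_of_gt (hvpos p hp)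
    have hQ : fderiv ℝ w p (0, 1) ≠ 0 := hwy p hp
    have hX : p.1 ≠ 0 := ne_of_gt (hx p hp)
    have hden : (v p * v p) * (fderiv ℝ w p (0, 1) * fderiv ℝ w p (0, 1)) ≠ 0 := by
      simp [hV, hQ]
    have hF : HasFDerivAt (fun x : ℝ × ℝ => x.1 * x.1 *
            (fderiv ℝ v x (1, 0) * fderiv ℝ v x (1, 0)) *
            ((fun y : ℝ => y⁻¹) ∘ fun y => v y * v y *
              (fderiv ℝ w y (0, 1) * fderiv ℝ w y (0, 1))) x + v x * v x) _ p := (((hasFDerivAt_fst.mul hasFDerivAt_fst).mul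
          (hAx.hasFDerivAt.mul hAx.hasFDerivAt)).mul
        ((hasDerivAt_inv hden).comp_hasFDerivAt p
          ((hvd.hasFDerivAt.mul hvd.hasFDerivAt).mul (hWy.hasFDerivAt.mul hWy.hasFDerivAt)))).add
      (hvd.hasFDerivAt.mul hvd.hasFDerivAt)
    refine ⟨hF.differentiableAt, ?_, ?_⟩ <;>
    · rw [hF.fderiv]
      -- orthogonality function has vanishing derivative
      have hGev : (fun q : ℝ × ℝ => fderiv ℝ v q (1, 0) * fderiv ℝ w q (1, 0)
          + fderiv ℝ v q (0, 1) * fderiv ℝ w q (0, 1)) =ᶠ[nhds p] (fun _ => (0:ℝ)) := by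
        filter_upwards [hΩ.mem_nhds hp] with q hq
        exact heq3 q hq
      have hG : HasFDerivAt (fun q : ℝ × ℝ => fderiv ℝ v q (1, 0) * fderiv ℝ w q (1, 0)
          + fderiv ℝ v q (0, 1) * fderiv ℝ w q (0, 1))
          ((fderiv ℝ v p (1, 0)) • fderiv ℝ (fun q => fderiv ℝ w q (1, 0)) p
            + (fderiv ℝ w p (1, 0)) • fderiv ℝ (fun q => fderiv ℝ v q (1, 0)) p
            + ((fderiv ℝ v p (0, 1)) • fderiv ℝ (fun q => fderiv ℝ w q (0, 1)) p
            + (fderiv ℝ w p (0, 1)) • fderiv ℝ (fun q => fderiv ℝ v q (0, 1)) p)) p :=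
        (hAx.hasFDerivAt.mul hWx.hasFDerivAt).add (hAy.hasFDerivAt.mul hWy.hasFDerivAt)
      have hGD := hG.fderiv.symm.trans (hGev.fderiv_eq.trans (fderiv_const_apply 0))
      have h4 := congrArg (fun L : (ℝ × ℝ) →L[ℝ] ℝ => L ((1:ℝ), (0:ℝ))) hGD
      have h5 := congrArg (fun L : (ℝ × ℝ) →L[ℝ] ℝ => L ((0:ℝ), (1:ℝ))) hGD
      simp only [ContinuousLinearMap.add_apply, ContinuousLinearMap.smul_apply, smul_eq_mul,
        ContinuousLinearMap.zero_apply] at h4 h5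
      have hsv := symm_pd hΩ hv hp ((1:ℝ), (0:ℝ)) ((0:ℝ), (1:ℝ))
      have hsw := symm_pd hΩ hw hp ((1:ℝ), (0:ℝ)) ((0:ℝ), (1:ℝ))
      rw [hsv, hsw] at h5
      have hx1 := heq1 p hp
      have hx2 := heq2 p hp
      have hx3 := heq3 p hp
      field_simp at hx1 hx2
      have hpq : p.1 * ((fderiv ℝ w p (1, 0)) ^ 2 + (fderiv ℝ w p (0, 1)) ^ 2) ≠ 0 := by
        have h0 : (0:ℝ) < (fderiv ℝ w p (0, 1)) ^ 2 :=
          lt_of_le_of_ne (sq_nonneg _) (Ne.symm (pow_ne_zero 2 hQ))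
        have h1 : (0:ℝ) < (fderiv ℝ w p (1, 0)) ^ 2 + (fderiv ℝ w p (0, 1)) ^ 2 := by
          nlinarith [sq_nonneg (fderiv ℝ w p (1, 0))]
        exact mul_ne_zero hX (ne_of_gt h1)
      first
      | · -- x-direction
          simp only [ContinuousLinearMap.add_apply, ContinuousLinearMap.smul_apply, smul_eq_mul,
            ContinuousLinearMap.coe_fst', Function.comp_apply, Pi.mul_apply]
          field_simp
          apply mul_left_cancel₀ hpq
          linear_combination
              (2 * (fderiv ℝ v p (1, 0)) * p.1 * (fderiv ℝ w p (0, 1)) ^ 3) * hx2 +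
              (-2 * (fderiv ℝ v p (1, 0)) * p.1 ^ 3 * (v p) * (fderiv ℝ w p (0, 1)) ^ 2) * h5 +
              (2 * (fderiv ℝ v p (1, 0)) * p.1 ^ 3 * (v p) * (fderiv ℝ w p (0, 1)) * (fderiv ℝ w p (1, 0))) * h4 +
              (2 * (fderiv ℝ v p (1, 0)) * p.1 ^ 2 * (fderiv ℝ v p (0, 1)) * (fderiv ℝ w p (0, 1)) ^ 2) * hx1 +
              (2 * (fderiv ℝ v p (1, 0)) * p.1 * (-(p.1 ^ 2 * (v p) * (fderiv ℝ w p (0, 1)) * (fderiv ℝ (fun q => fderiv ℝ w q (1, 0)) p ((1:ℝ), (0:ℝ)))) - p.1 ^ 2 * (v p) * (fderiv ℝ w p (1, 0)) * (fderiv ℝ (fun q => fderiv ℝ w q (0, 1)) p ((1:ℝ), (0:ℝ)))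
                - 2 * p.1 ^ 2 * (fderiv ℝ v p (0, 1)) * (fderiv ℝ w p (0, 1)) ^ 2 + p.1 ^ 2 * (fderiv ℝ w p (0, 1)) * ((fderiv ℝ w p (0, 1)) * (fderiv ℝ v p (0, 1)) - (fderiv ℝ v p (1, 0)) * (fderiv ℝ w p (1, 0)))
                + p.1 * (v p) * (fderiv ℝ w p (0, 1)) * (fderiv ℝ w p (1, 0)))) * hx3
      | · -- y-direction
          simp only [ContinuousLinearMap.add_apply, ContinuousLinearMap.smul_apply, smul_eq_mul,
            ContinuousLinearMap.coe_fst', Function.comp_apply, Pi.mul_apply]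
          rw [hsv]
          field_simp
          apply mul_left_cancel₀ hpq
          linear_combination
              (2 * p.1 * (p.1 ^ 2 * (v p) * ((fderiv ℝ w p (1, 0)) ^ 2 + (fderiv ℝ w p (0, 1)) ^ 2) * (fderiv ℝ v p (1, 0)) + (fderiv ℝ v p (0, 1)) * p.1 ^ 2 * (v p) * (fderiv ℝ w p (0, 1)) * (fderiv ℝ w p (1, 0)))) * h4 +
              (2 * p.1 * (-(p.1 * ((fderiv ℝ w p (1, 0)) ^ 2 + (fderiv ℝ w p (0, 1)) ^ 2) * (fderiv ℝ v p (1, 0)) ^ 2) + p.1 * (fderiv ℝ v p (0, 1)) ^ 2 * (fderiv ℝ w p (0, 1)) ^ 2)) * hx1 +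
              (2 * p.1 * (fderiv ℝ v p (0, 1)) * (fderiv ℝ w p (0, 1)) ^ 3) * hx2 +
              (-2 * p.1 * (fderiv ℝ v p (0, 1)) * (fderiv ℝ w p (0, 1)) * p.1 ^ 2 * (v p) * (fderiv ℝ w p (0, 1))) * h5 +
              (2 * p.1 * (2 * p.1 ^ 2 * ((fderiv ℝ w p (1, 0)) ^ 2 + (fderiv ℝ w p (0, 1)) ^ 2) * (fderiv ℝ v p (1, 0)) ^ 2 - p.1 ^ 2 * (v p) * ((fderiv ℝ w p (1, 0)) ^ 2 + (fderiv ℝ w p (0, 1)) ^ 2) * (fderiv ℝ (fun q => fderiv ℝ v q (1, 0)) p ((1:ℝ), (0:ℝ)))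
                - (fderiv ℝ v p (0, 1)) * p.1 ^ 2 * (v p) * (fderiv ℝ w p (0, 1)) * (fderiv ℝ (fun q => fderiv ℝ w q (1, 0)) p ((1:ℝ), (0:ℝ))) - (fderiv ℝ v p (0, 1)) * p.1 ^ 2 * (v p) * (fderiv ℝ w p (1, 0)) * (fderiv ℝ (fun q => fderiv ℝ w q (0, 1)) p ((1:ℝ), (0:ℝ)))
                - 2 * p.1 ^ 2 * (fderiv ℝ v p (0, 1)) ^ 2 * (fderiv ℝ w p (0, 1)) ^ 2 + p.1 ^ 2 * (fderiv ℝ w p (0, 1)) * (fderiv ℝ v p (0, 1)) * ((fderiv ℝ w p (0, 1)) * (fderiv ℝ v p (0, 1)) - (fderiv ℝ v p (1, 0)) * (fderiv ℝ w p (1, 0)))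
                + p.1 * (v p) * ((fderiv ℝ v p (0, 1)) * (fderiv ℝ w p (1, 0)) * (fderiv ℝ w p (0, 1)) - (fderiv ℝ v p (1, 0)) * (fderiv ℝ w p (0, 1)) ^ 2 - (fderiv ℝ v p (1, 0)) * (fderiv ℝ w p (1, 0)) ^ 2))) * hx3
  -- full derivative vanishes
  have hfz : ∀ r ∈ Ω, fderiv ℝ (fun x : ℝ × ℝ => x.1 * x.1 *
      (fderiv ℝ v x (1, 0) * fderiv ℝ v x (1, 0)) *
      ((fun y : ℝ => y⁻¹) ∘ fun y => v y * v y *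
        (fderiv ℝ w y (0, 1) * fderiv ℝ w y (0, 1))) x + v x * v x) r = 0 := by
    intro r hr
    obtain ⟨hd, h1, h2⟩ := hmain r hr
    apply ContinuousLinearMap.ext
    intro z
    have hz : z = z.1 • ((1:ℝ), (0:ℝ)) + z.2 • ((0:ℝ), (1:ℝ)) := by
      apply Prod.ext <;> simp
    rw [hz, map_add, map_smul, map_smul, h1, h2]
    simp
  -- local constancy
  have hloc : ∀ z ∈ Ω, ∃ ε > 0, Metric.ball z ε ⊆ Ω ∧
      ∀ r ∈ Metric.ball z ε, (fun x : ℝ × ℝ => x.1 * x.1 *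
        (fderiv ℝ v x (1, 0) * fderiv ℝ v x (1, 0)) *
        ((fun y : ℝ => y⁻¹) ∘ fun y => v y * v y *
          (fderiv ℝ w y (0, 1) * fderiv ℝ w y (0, 1))) x + v x * v x) r =
        (fun x : ℝ × ℝ => x.1 * x.1 *
        (fderiv ℝ v x (1, 0) * fderiv ℝ v x (1, 0)) *
        ((fun y : ℝ => y⁻¹) ∘ fun y => v y * v y *
          (fderiv ℝ w y (0, 1) * fderiv ℝ w y (0, 1))) x + v x * v x) z := by
    intro z hz
    obtain ⟨ε, hε, hball⟩ := Metric.isOpen_iff.1 hΩ z hz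
    refine ⟨ε, hε, hball, ?_⟩
    intro r hr
    refine (convex_ball z ε).is_const_of_fderivWithin_eq_zero (𝕜 := ℝ)
      (fun s hs => ((hmain s (hball hs)).1).differentiableWithinAt)
      (fun s hs => ?_) hr (Metric.mem_ball_self hε)
    rw [fderivWithin_of_isOpen Metric.isOpen_ball hs]
    exact hfz s (hball hs)
  -- global constancy on the connected set
  have hconst : ∀ p ∈ Ω, ∀ q ∈ Ω, (fun x : ℝ × ℝ => x.1 * x.1 *
      (fderiv ℝ v x (1, 0) * fderiv ℝ v x (1, 0)) *
      ((fun y : ℝ => y⁻¹) ∘ fun y => v y * v y *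
        (fderiv ℝ w y (0, 1) * fderiv ℝ w y (0, 1))) x + v x * v x) p =
      (fun x : ℝ × ℝ => x.1 * x.1 *
      (fderiv ℝ v x (1, 0) * fderiv ℝ v x (1, 0)) *
      ((fun y : ℝ => y⁻¹) ∘ fun y => v y * v y *
        (fderiv ℝ w y (0, 1) * fderiv ℝ w y (0, 1))) x + v x * v x) q := by
    set Fb : ℝ × ℝ → ℝ := fun x : ℝ × ℝ => x.1 * x.1 *
      (fderiv ℝ v x (1, 0) * fderiv ℝ v x (1, 0)) *
      ((fun y : ℝ => y⁻¹) ∘ fun y => v y * v y *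
        (fderiv ℝ w y (0, 1) * fderiv ℝ w y (0, 1))) x + v x * v x with hFb
    intro p hp q hq
    by_contra hne
    have hSopen : IsOpen {z | z ∈ Ω ∧ Fb z = Fb p} := by
      rw [Metric.isOpen_iff]
      rintro z ⟨hzΩ, hzf⟩
      obtain ⟨ε, hε, hball, hcst⟩ := hloc z hzΩ
      exact ⟨ε, hε, fun r hr => ⟨hball hr, (hcst r hr).trans hzf⟩⟩
    have hTopen : IsOpen {z | z ∈ Ω ∧ Fb z ≠ Fb p} := by
      rw [Metric.isOpen_iff]
      rintro z ⟨hzΩ, hzf⟩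
      obtain ⟨ε, hε, hball, hcst⟩ := hloc z hzΩ
      exact ⟨ε, hε, fun r hr => ⟨hball hr, fun h => hzf ((hcst r hr).symm.trans h)⟩⟩
    obtain ⟨r, hrΩ, hr1, hr2⟩ := hconn.isPreconnected _ _ hSopen hTopen
      (fun z hz => by
        by_cases h : Fb z = Fb p
        · exact Or.inl ⟨hz, h⟩
        · exact Or.inr ⟨hz, h⟩)
      ⟨p, hp, hp, rfl⟩ ⟨q, hq, hq, fun h => hne h.symm⟩
    exact hr2.2 hr1.2
  refine ⟨?_, ?_⟩
  · intro p hp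
    rw [hfe]
    exact ⟨(hmain p hp).2.1, (hmain p hp).2.2⟩
  · intro p hp q hq
    exact (congrFun hfe p).trans ((hconst p hp q hq).trans (congrFun hfe q).symm)
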